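/- Let f, g : (0,∞) → ℂ be locally integrable, suppose f(x) = c_f + O(x^{−B}) and g(x) = c_g + O(x^{−B}) for all B > 0 as x → ∞ (rapid decay to constants c_f, c_g), and suppose f(1/x) = ε x^k g(x) for some real k > 0 and nonzero complex ε. Then the Mellin transforms M f(s) = ∫₀^∞ t^{s−1}(f(t) − c_f) dt and M g(s) (defined analogously) extend to meromorphic functions on ℂ, holomorphic away from s ∈ {0, k}, and satisfy M f(k − s) = ε · M g(s). -/
import Mathlib


open Real Complex MeasureTheory Set Asymptotics Filter

lemma aux_rpow_bigO (r : ℝ) :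
    (fun x : ℝ => x ^ (-(max 1 (-r)))) =O[atTop] (fun x : ℝ => x ^ r) := by
  refine Asymptotics.IsBigO.of_bound 1 ?_
  filter_upwards [eventually_ge_atTop (1:ℝ)] with x hx
  rw [one_mul, Real.norm_eq_abs, Real.norm_eq_abs,
    _root_.abs_of_nonneg (Real.rpow_nonneg (by linarith) _),
    _root_.abs_of_nonneg (Real.rpow_nonneg (by linarith) _)]
  exact Real.rpow_le_rpow_of_exponent_le hx (by simp [neg_le])

lemma aux_bigO_rpow {h : ℝ → ℂ} {c : ℂ}
    (hh : ∀ B : ℝ, 0 < B → (fun x => h x - c) =O[atTop] (fun x : ℝ => x ^ (-B)))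
    (r : ℝ) : (h · - c) =O[atTop] (· ^ r) :=
  (hh _ (lt_of_lt_of_le one_pos (le_max_left 1 (-r)))).trans (aux_rpow_bigO r)

theorem weak_FE_pair_functional_equation
    {f g : ℝ → ℂ} {cf cg : ℂ} {k : ℝ} {ε : ℂ}
    (hf_int : LocallyIntegrableOn f (Ioi 0))
    (hg_int : LocallyIntegrableOn g (Ioi 0))
    (hk : 0 < k) (hε : ε ≠ 0)
    (hf_top : ∀ B : ℝ, 0 < B → (fun x => f x - cf) =O[atTop] (fun x : ℝ => x ^ (-B)))
    (hg_top : ∀ B : ℝ, 0 < B → (fun x => g x - cg) =O[atTop] (fun x : ℝ => x ^ (-B)))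
    (h_feq : ∀ x ∈ Ioi (0 : ℝ), f (1 / x) = ε * (x : ℂ) ^ (k : ℂ) * g x) :
    ∃ Mf Mg : ℂ → ℂ,
      (∀ s : ℂ, k < s.re → Mf s = mellin (fun t => f t - cf) s) ∧
      (∀ s : ℂ, k < s.re → Mg s = mellin (fun t => g t - cg) s) ∧
      DifferentiableOn ℂ Mf {(0 : ℂ), (k : ℂ)}ᶜ ∧
      DifferentiableOn ℂ Mg {(0 : ℂ), (k : ℂ)}ᶜ ∧
      ∀ s : ℂ, Mf ((k : ℂ) - s) = ε * Mg s := by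
  set P : WeakFEPair ℂ :=
    { f := f, g := g, k := k, ε := ε, f₀ := cf, g₀ := cg,
      hf_int := hf_int, hg_int := hg_int, hk := hk, hε := hε,
      h_feq := fun x hx => by
        rw [h_feq x hx, smul_eq_mul, Complex.ofReal_cpow (le_of_lt hx)],
      hf_top := aux_bigO_rpow hf_top,
      hg_top := aux_bigO_rpow hg_top }
  refine ⟨P.Λ, P.symm.Λ, ?_, ?_, ?_, ?_, ?_⟩
  · exact fun s hs => ((P.hasMellin hs).2).symm
  · exact fun s hs => ((P.symm.hasMellin hs).2).symm
  · intro s hs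
    simp only [mem_compl_iff, mem_insert_iff, mem_singleton_iff, not_or] at hs
    exact (P.differentiableAt_Λ (Or.inl hs.1) (Or.inl hs.2)).differentiableWithinAt
  · intro s hs
    simp only [mem_compl_iff, mem_insert_iff, mem_singleton_iff, not_or] at hs
    exact (P.symm.differentiableAt_Λ (Or.inl hs.1) (Or.inl hs.2)).differentiableWithinAt
  · intro s
    simpa using P.functional_equation s
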